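/- Let η = (η_1,…,η_n) be integers with η_1 ≥ … ≥ η_n ≥ 0, let δ := (n−1, n−2, …, 1, 0), and for μ ∈ ℕ^n let a_μ := det(x_i^{μ_j})_{1≤i,j≤n} ∈ ℤ[x_1,…,x_n]. Let 𝒵_η be the set of all GT n-parallelograms z framed by P/Q with d(z;k,p) ≥ −(η_k − η_{k+1}) for every k ∈ {1,…,n−1} and p ∈ {0,…,m−1} (the η-ballot-admissible parallelograms), and for z ∈ 𝒵_η write c(z) := (#_1(z),…,#_n(z)). Then, in ℤ[x_1,…,x_n], a_{η+δ} · s_{P/Q}(x_1,…,x_n) = Σ_{z∈𝒵_η} a_{η+c(z)+δ}. -/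

import Mathlib

open Finset
open scoped Classical

def IsGT (m n : ℕ) (P Q : ℕ → ℤ) (g : ℕ → ℕ → ℤ) : Prop :=
  (∀ k < m, g 0 k = Q (k + 1)) ∧
  (∀ k < m, g n k = P (k + 1)) ∧
  (∀ i < n, ∀ k < m, g i k ≤ g (i + 1) k) ∧
  (∀ i < n, ∀ k, k + 1 < m → g (i + 1) (k + 1) ≤ g i k) ∧
  (∀ i k, n < i ∨ m ≤ k → g i k = 0)

def ShapeHyps (m n : ℕ) (P Q : ℕ → ℤ) : Prop :=
  2 ≤ n ∧ n ≤ m ∧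
  (∀ r, 1 ≤ r → r < m → P (r + 1) ≤ P r) ∧ 0 ≤ P m ∧
  (∀ r, 1 ≤ r → r < m → Q (r + 1) ≤ Q r) ∧ 0 ≤ Q m ∧
  (∀ r, 1 ≤ r → r ≤ m → Q r ≤ P r) ∧
  (∀ c : ℤ, ((Finset.Icc 1 m).filter (fun r => Q r < c ∧ c ≤ P r)).card ≤ n)
/-- The finite set of cells of the skew shape `P/Q`: pairs `(r,c)` with
`1 ≤ r ≤ m` and `Q_r < c ≤ P_r`. -/
noncomputable def cells (m : ℕ) (P Q : ℕ → ℤ) : Finset (ℕ × ℤ) :=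
  (Finset.Icc 1 m ×ˢ Finset.Icc 1 (P 1)).filter fun x => Q x.1 < x.2 ∧ x.2 ≤ P x.1

/-- A semistandard `n`-tableau of skew shape `P/Q`: entries in `{1,…,n}`, rows
weakly increasing, columns strictly increasing; values outside the cells of the
shape are normalized to `0`. -/
def IsSSYT (m n : ℕ) (P Q : ℕ → ℤ) (T : ℕ × ℤ → ℕ) : Prop :=
  (∀ x ∈ cells m P Q, 1 ≤ T x ∧ T x ≤ n) ∧
  (∀ (r : ℕ) (c : ℤ), (r, c) ∈ cells m P Q → (r, c + 1) ∈ cells m P Q →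
    T (r, c) ≤ T (r, c + 1)) ∧
  (∀ (r : ℕ) (c : ℤ), (r, c) ∈ cells m P Q → (r + 1, c) ∈ cells m P Q →
    T (r, c) < T (r + 1, c)) ∧
  (∀ x, x ∉ cells m P Q → T x = 0)

/-- `#_i(T)`: the number of cells of `T` with entry `i`. -/
noncomputable def entryCount (m : ℕ) (P Q : ℕ → ℤ) (T : ℕ × ℤ → ℕ) (i : ℕ) : ℕ :=
  ((cells m P Q).filter fun x => T x = i).card

/-- The skew Schur polynomial `s_{P/Q}(x_1,…,x_n)`, with the variable `x_{i+1}`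
encoded as `MvPolynomial.X (i : Fin n)`. -/
noncomputable def skewSchur (m n : ℕ) (P Q : ℕ → ℤ) : MvPolynomial (Fin n) ℤ :=
  ∑ᶠ T ∈ {T : ℕ × ℤ → ℕ | IsSSYT m n P Q T},
    ∏ i : Fin n, MvPolynomial.X i ^ entryCount m P Q T ((i : ℕ) + 1)

/-- `#_i(g)` for a GT parallelogram `g`. -/
def cnt (m i : ℕ) (g : ℕ → ℕ → ℤ) : ℤ :=
  (∑ k ∈ Finset.range m, g i k) - (∑ k ∈ Finset.range m, g (i - 1) k)

/-- The statistic `d(z;k,p)` (here `g k q` is the entry `g_{k,k-q}`). -/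
def dstat (z : ℕ → ℕ → ℤ) (k p : ℕ) : ℤ :=
  (∑ q ∈ Finset.range p, (2 * z k q - z (k - 1) q - z (k + 1) q)) + z k p - z (k + 1) p

/-- The alternant `a_μ = det (x_i^{μ_j})`. -/
noncomputable def alt (n : ℕ) (μ : Fin n → ℕ) : MvPolynomial (Fin n) ℤ :=
  Matrix.det (Matrix.of fun i j : Fin n => MvPolynomial.X i ^ μ j)


/-! ### Auxiliary development -/

section Aux

variable {m n : ℕ} {P Q : ℕ → ℤ}

lemma ShapeHyps.P_anti (h : ShapeHyps m n P Q) :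
    ∀ r s, 1 ≤ r → r ≤ s → s ≤ m → P s ≤ P r := by
  intro r s hr hrs hsm
  induction s with
  | zero => omega
  | succ t ih =>
    rcases Nat.eq_or_lt_of_le hrs with rfl | hlt
    · exact le_rfl
    · have ht : r ≤ t := by omega
      have := h.2.2.1 t (by omega) (by omega)
      exact this.trans (ih ht (by omega))

lemma ShapeHyps.Q_anti (h : ShapeHyps m n P Q) :
    ∀ r s, 1 ≤ r → r ≤ s → s ≤ m → Q s ≤ Q r := by
  intro r s hr hrs hsm
  induction s with
  | zero => omega
  | succ t ih =>
    rcases Nat.eq_or_lt_of_le hrs with rfl | hlt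
    · exact le_rfl
    · have ht : r ≤ t := by omega
      have := h.2.2.2.2.1 t (by omega) (by omega)
      exact this.trans (ih ht (by omega))

lemma ShapeHyps.Q_nonneg (h : ShapeHyps m n P Q) {r : ℕ} (hr : 1 ≤ r) (hrm : r ≤ m) :
    0 ≤ Q r :=
  h.2.2.2.2.2.1.trans (h.Q_anti r m hr hrm le_rfl)

lemma ShapeHyps.QP (h : ShapeHyps m n P Q) {r : ℕ} (hr : 1 ≤ r) (hrm : r ≤ m) :
    Q r ≤ P r := h.2.2.2.2.2.2.1 r hr hrm

lemma mem_cells (h : ShapeHyps m n P Q) {r : ℕ} {c : ℤ} :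
    (r, c) ∈ cells m P Q ↔ 1 ≤ r ∧ r ≤ m ∧ Q r < c ∧ c ≤ P r := by
  unfold cells
  simp only [Finset.mem_filter, Finset.mem_product, Finset.mem_Icc]
  constructor
  · rintro ⟨⟨⟨h1, h2⟩, _, _⟩, h5, h6⟩
    exact ⟨h1, h2, h5, h6⟩
  · rintro ⟨h1, h2, h5, h6⟩
    have hq : 0 ≤ Q r := h.Q_nonneg h1 h2
    have hp : P r ≤ P 1 := h.P_anti 1 r le_rfl h1 h2
    exact ⟨⟨⟨h1, h2⟩, by omega, h6.trans hp⟩, h5, h6⟩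

lemma IsGT.mono {z : ℕ → ℕ → ℤ} (hz : IsGT m n P Q z) {i i' q : ℕ}
    (h1 : i ≤ i') (h2 : i' ≤ n) (hq : q < m) : z i q ≤ z i' q := by
  induction i' with
  | zero => obtain rfl := Nat.le_zero.mp h1; exact le_rfl
  | succ t ih =>
    rcases Nat.eq_or_lt_of_le h1 with rfl | hlt
    · exact le_rfl
    · exact (ih (by omega) (by omega)).trans (hz.2.2.1 t (by omega) q hq)

lemma IsGT.Q_le {z : ℕ → ℕ → ℤ} (hz : IsGT m n P Q z) {i q : ℕ}
    (hi : i ≤ n) (hq : q < m) : Q (q + 1) ≤ z i q := by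
  rw [← hz.1 q hq]; exact hz.mono (Nat.zero_le _) hi hq

lemma IsGT.le_P {z : ℕ → ℕ → ℤ} (hz : IsGT m n P Q z) {i q : ℕ}
    (hi : i ≤ n) (hq : q < m) : z i q ≤ P (q + 1) := by
  rw [← hz.2.1 q hq]; exact hz.mono hi le_rfl hq

lemma cnt_nonneg {z : ℕ → ℕ → ℤ} (hz : IsGT m n P Q z) {i : ℕ}
    (hi1 : 1 ≤ i) (hin : i ≤ n) : 0 ≤ cnt m i z := by
  unfold cnt
  rw [← Finset.sum_sub_distrib]
  apply Finset.sum_nonneg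
  intro q hq
  rw [Finset.mem_range] at hq
  have := hz.mono (i := i - 1) (i' := i) (by omega) hin hq
  omega

/-- A down-closed subset of an integer interval is an initial segment. -/
lemma downclosed_mem_iff {a b : ℤ} {S : Finset ℤ} (hS : S ⊆ Finset.Icc a b)
    (dc : ∀ x ∈ S, ∀ y, a ≤ y → y ≤ x → y ∈ S) {x : ℤ} (hx : x ∈ Finset.Icc a b) :
    x ∈ S ↔ x < a + S.card := by
  rw [Finset.mem_Icc] at hx
  constructor
  · intro hxS
    have hsub : Finset.Icc a x ⊆ S := by
      intro y hy
      rw [Finset.mem_Icc] at hy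
      exact dc x hxS y hy.1 hy.2
    have := Finset.card_le_card hsub
    rw [Int.card_Icc] at this
    omega
  · intro hlt
    by_contra hxS
    have hsub : S ⊆ Finset.Icc a (x - 1) := by
      intro y hy
      rw [Finset.mem_Icc]
      refine ⟨(Finset.mem_Icc.mp (hS hy)).1, ?_⟩
      by_contra hyx
      exact hxS (dc y hy x hx.1 (by omega))
    have := Finset.card_le_card hsub
    rw [Int.card_Icc] at this
    omega

/-- An up-closed subset of `range (N+1)` is a final segment. -/
lemma upclosed_mem_iff {N : ℕ} {S : Finset ℕ} (hS : S ⊆ Finset.range (N + 1))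
    (uc : ∀ x ∈ S, ∀ y, x ≤ y → y ≤ N → y ∈ S) {x : ℕ} (hx : x ≤ N) :
    x ∈ S ↔ N + 1 - S.card ≤ x := by
  constructor
  · intro hxS
    have hsub : Finset.Icc x N ⊆ S := by
      intro y hy
      rw [Finset.mem_Icc] at hy
      exact uc x hxS y hy.1 hy.2
    have := Finset.card_le_card hsub
    rw [Nat.card_Icc] at this
    omega
  · intro hle
    by_contra hxS
    have hsub : S ⊆ Finset.Icc (x + 1) N := by
      intro y hy
      rw [Finset.mem_Icc]
      have hyN : y ≤ N := by
        have := hS hy; rw [Finset.mem_range] at this; omega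
      refine ⟨?_, hyN⟩
      by_contra hyx
      exact hxS (uc y hy x (by omega) hx)
    have := Finset.card_le_card hsub
    rw [Nat.card_Icc] at this
    omega

end Aux


/-! ### The bijection between tableaux and GT parallelograms -/

/-- The GT parallelogram associated to a tableau: `g i q` is `Q (q+1)` plus the
number of entries `≤ i` in row `q+1`. -/
noncomputable def gtOf (m n : ℕ) (P Q : ℕ → ℤ) (T : ℕ × ℤ → ℕ) : ℕ → ℕ → ℤ :=
  fun i q => if i ≤ n ∧ q < m then
    Q (q + 1) + ((Finset.Icc (Q (q + 1) + 1) (P (q + 1))).filter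
      (fun c => 1 ≤ T (q + 1, c) ∧ T (q + 1, c) ≤ i)).card
  else 0

/-- The tableau associated to a GT parallelogram. -/
noncomputable def tabOf (m n : ℕ) (P Q : ℕ → ℤ) (z : ℕ → ℕ → ℤ) : ℕ × ℤ → ℕ :=
  fun x => if x ∈ cells m P Q then
    n + 1 - ((Finset.range (n + 1)).filter (fun i => x.2 ≤ z i (x.1 - 1))).card
  else 0

section Bij

variable {m n : ℕ} {P Q : ℕ → ℤ} {T : ℕ × ℤ → ℕ} {z : ℕ → ℕ → ℤ}

lemma IsSSYT.row_mono (hT : IsSSYT m n P Q T) {r : ℕ} {c c' : ℤ}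
    (hc : (r, c) ∈ cells m P Q) (hc' : (r, c') ∈ cells m P Q) (hcc : c ≤ c') :
    T (r, c) ≤ T (r, c') := by
  refine Int.le_induction (motive := fun d _ => (r, d) ∈ cells m P Q → T (r, c) ≤ T (r, d))
    (fun _ => le_rfl) ?_ c' hcc hc'
  intro d hd ih hmem
  have hcells : (r, d) ∈ cells m P Q := by
    unfold cells at hc hmem ⊢
    simp only [Finset.mem_filter, Finset.mem_product, Finset.mem_Icc] at hc hmem ⊢
    refine ⟨⟨hc.1.1, ?_, ?_⟩, ?_, ?_⟩ <;> omega
  exact (ih hcells).trans (hT.2.1 r d hcells hmem)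

lemma gtOf_le_iff (h : ShapeHyps m n P Q) (hT : IsSSYT m n P Q T) {r : ℕ} {c : ℤ}
    (hc : (r, c) ∈ cells m P Q) {i : ℕ} (hi : i ≤ n) :
    T (r, c) ≤ i ↔ c ≤ gtOf m n P Q T i (r - 1) := by
  obtain ⟨hr1, hrm, hQc, hcP⟩ := (mem_cells h).mp hc
  have hr : r - 1 + 1 = r := by omega
  have hbr : i ≤ n ∧ r - 1 < m := ⟨hi, by omega⟩
  set S := (Finset.Icc (Q r + 1) (P r)).filter
      (fun c => 1 ≤ T (r, c) ∧ T (r, c) ≤ i) with hSdef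
  have hgt : gtOf m n P Q T i (r - 1) = Q r + S.card := by
    unfold gtOf; rw [if_pos hbr, hr]
  have hS : S ⊆ Finset.Icc (Q r + 1) (P r) := Finset.filter_subset _ _
  have dc : ∀ x ∈ S, ∀ y, Q r + 1 ≤ y → y ≤ x → y ∈ S := by
    intro x hx y hy1 hy2
    rw [hSdef, Finset.mem_filter] at hx ⊢
    obtain ⟨hxI, hx1, hxi⟩ := hx
    rw [Finset.mem_Icc] at hxI
    have hycell : (r, y) ∈ cells m P Q := (mem_cells h).mpr ⟨hr1, hrm, by omega, by omega⟩
    have hxcell : (r, x) ∈ cells m P Q := (mem_cells h).mpr ⟨hr1, hrm, by omega, hxI.2⟩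
    refine ⟨Finset.mem_Icc.mpr ⟨hy1, by omega⟩, (hT.1 _ hycell).1,
      (hT.row_mono hycell hxcell hy2).trans hxi⟩
  have hcI : c ∈ Finset.Icc (Q r + 1) (P r) := Finset.mem_Icc.mpr ⟨by omega, hcP⟩
  have hmem := downclosed_mem_iff hS dc hcI
  have hcS : c ∈ S ↔ T (r, c) ≤ i := by
    rw [hSdef, Finset.mem_filter]
    exact ⟨fun hx => hx.2.2, fun hx => ⟨hcI, (hT.1 _ hc).1, hx⟩⟩
  rw [← hcS, hmem, hgt]
  omega

lemma gtOf_isGT (h : ShapeHyps m n P Q) (hT : IsSSYT m n P Q T) :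
    IsGT m n P Q (gtOf m n P Q T) := by
  refine ⟨?_, ?_, ?_, ?_, ?_⟩
  · intro k hk
    unfold gtOf
    rw [if_pos ⟨Nat.zero_le n, hk⟩]
    have : ((Finset.Icc (Q (k + 1) + 1) (P (k + 1))).filter
        (fun c => 1 ≤ T (k + 1, c) ∧ T (k + 1, c) ≤ 0)) = ∅ := by
      apply Finset.filter_false_of_mem
      intro c _
      omega
    rw [this]; simp
  · intro k hk
    unfold gtOf
    rw [if_pos ⟨le_rfl, hk⟩]
    have : ((Finset.Icc (Q (k + 1) + 1) (P (k + 1))).filter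
        (fun c => 1 ≤ T (k + 1, c) ∧ T (k + 1, c) ≤ n)) = Finset.Icc (Q (k + 1) + 1) (P (k + 1)) := by
      apply Finset.filter_true_of_mem
      intro c hcI
      rw [Finset.mem_Icc] at hcI
      have hcell : (k + 1, c) ∈ cells m P Q :=
        (mem_cells h).mpr ⟨by omega, by omega, by omega, hcI.2⟩
      exact hT.1 _ hcell
    rw [this, Int.card_Icc]
    have := h.QP (r := k + 1) (by omega) (by omega)
    omega
  · intro i hi k hk
    unfold gtOf
    rw [if_pos ⟨by omega, hk⟩, if_pos ⟨by omega, hk⟩]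
    have hsub : ((Finset.Icc (Q (k + 1) + 1) (P (k + 1))).filter
          (fun c => 1 ≤ T (k + 1, c) ∧ T (k + 1, c) ≤ i))
        ⊆ ((Finset.Icc (Q (k + 1) + 1) (P (k + 1))).filter
          (fun c => 1 ≤ T (k + 1, c) ∧ T (k + 1, c) ≤ i + 1)) := by
      intro c hcmem
      rw [Finset.mem_filter] at hcmem ⊢
      exact ⟨hcmem.1, hcmem.2.1, by omega⟩
    have := Finset.card_le_card hsub
    omega
  · intro i hi k hk
    unfold gtOf
    rw [if_pos ⟨by omega, by omega⟩, if_pos ⟨by omega, by omega⟩]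
    rw [(show (k : ℕ) + 1 + 1 = k + 2 by omega)]
    set S' := (Finset.Icc (Q (k + 2) + 1) (P (k + 2))).filter
      (fun c => 1 ≤ T (k + 2, c) ∧ T (k + 2, c) ≤ i + 1) with hS'def
    set S := (Finset.Icc (Q (k + 1) + 1) (P (k + 1))).filter
      (fun c => 1 ≤ T (k + 1, c) ∧ T (k + 1, c) ≤ i) with hSdef
    have hQP2 : Q (k + 2) ≤ P (k + 2) := h.QP (by omega) (by omega)
    have htP : (Q (k + 2) : ℤ) + S'.card ≤ P (k + 2) := by
      have h1 : S'.card ≤ (Finset.Icc (Q (k + 2) + 1) (P (k + 2))).card :=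
        Finset.card_le_card (Finset.filter_subset _ _)
      rw [Int.card_Icc] at h1
      omega
    have key : Finset.Icc (Q (k + 1) + 1) (Q (k + 2) + S'.card) ⊆ S := by
      intro c hcmem
      rw [Finset.mem_Icc] at hcmem
      have hQ21 : Q (k + 2) ≤ Q (k + 1) := h.Q_anti (k + 1) (k + 2) (by omega) (by omega) (by omega)
      have hP21 : P (k + 2) ≤ P (k + 1) := h.P_anti (k + 1) (k + 2) (by omega) (by omega) (by omega)
      have hcell2 : (k + 2, c) ∈ cells m P Q :=
        (mem_cells h).mpr ⟨by omega, by omega, by omega, by omega⟩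
      have hcell1 : (k + 1, c) ∈ cells m P Q :=
        (mem_cells h).mpr ⟨by omega, by omega, by omega, by omega⟩
      have hT2 : T (k + 2, c) ≤ i + 1 := by
        rw [gtOf_le_iff h hT hcell2 (by omega : i + 1 ≤ n),
          (show (k : ℕ) + 2 - 1 = k + 1 by omega)]
        unfold gtOf
        rw [if_pos (⟨by omega, by omega⟩ : i + 1 ≤ n ∧ k + 1 < m),
          (show (k : ℕ) + 1 + 1 = k + 2 by omega), ← hS'def]
        omega
      have hT1 : T (k + 1, c) < T (k + 2, c) := hT.2.2.1 (k + 1) c hcell1 hcell2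
      rw [hSdef, Finset.mem_filter, Finset.mem_Icc]
      exact ⟨⟨by omega, by omega⟩, (hT.1 _ hcell1).1, by omega⟩
    have hcard := Finset.card_le_card key
    rw [Int.card_Icc] at hcard
    omega
  · intro i k hik
    unfold gtOf
    rw [if_neg (by omega)]

lemma tabOf_le_iff (h : ShapeHyps m n P Q) (hz : IsGT m n P Q z) {r : ℕ} {c : ℤ}
    (hc : (r, c) ∈ cells m P Q) {i : ℕ} (hi : i ≤ n) :
    tabOf m n P Q z (r, c) ≤ i ↔ c ≤ z i (r - 1) := by
  obtain ⟨hr1, hrm, hQc, hcP⟩ := (mem_cells h).mp hc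
  have hq : r - 1 < m := by omega
  set F := (Finset.range (n + 1)).filter (fun j => c ≤ z j (r - 1)) with hFdef
  have htab : tabOf m n P Q z (r, c) = n + 1 - F.card := by
    unfold tabOf; rw [if_pos hc]
  have hF : F ⊆ Finset.range (n + 1) := Finset.filter_subset _ _
  have uc : ∀ x ∈ F, ∀ y, x ≤ y → y ≤ n → y ∈ F := by
    intro x hx y hxy hyn
    rw [hFdef, Finset.mem_filter, Finset.mem_range] at hx ⊢
    exact ⟨by omega, hx.2.trans (hz.mono hxy hyn hq)⟩
  have hmem := upclosed_mem_iff hF uc (x := i) hi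
  have hiF : i ∈ F ↔ c ≤ z i (r - 1) := by
    rw [hFdef, Finset.mem_filter, Finset.mem_range]
    exact ⟨fun hx => hx.2, fun hx => ⟨by omega, hx⟩⟩
  rw [← hiF, hmem, htab]

lemma tabOf_isSSYT (h : ShapeHyps m n P Q) (hz : IsGT m n P Q z) :
    IsSSYT m n P Q (tabOf m n P Q z) := by
  have hbound : ∀ x ∈ cells m P Q, 1 ≤ tabOf m n P Q z x ∧ tabOf m n P Q z x ≤ n := by
    rintro ⟨r, c⟩ hc
    obtain ⟨hr1, hrm, hQc, hcP⟩ := (mem_cells h).mp hc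
    have hrr : r - 1 + 1 = r := by omega
    constructor
    · by_contra hcon
      have h0 : tabOf m n P Q z (r, c) ≤ 0 := by omega
      rw [tabOf_le_iff h hz hc (Nat.zero_le n)] at h0
      have hQ0 := hz.1 (r - 1) (by omega)
      rw [hrr] at hQ0
      omega
    · rw [tabOf_le_iff h hz hc le_rfl]
      have hP0 := hz.2.1 (r - 1) (by omega)
      rw [hrr] at hP0
      omega
  refine ⟨hbound, ?_, ?_, ?_⟩
  · intro r c hc hc'
    have hv := (hbound _ hc').2
    rw [tabOf_le_iff h hz hc hv]
    have := (tabOf_le_iff h hz hc' hv).mp le_rfl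
    omega
  · intro r c hc hc'
    obtain ⟨hr1, hrm, hQc, hcP⟩ := (mem_cells h).mp hc
    obtain ⟨hr1', hrm', hQc', hcP'⟩ := (mem_cells h).mp hc'
    set v := tabOf m n P Q z (r + 1, c) with hvdef
    obtain ⟨hv1, hvn⟩ := hbound _ hc'
    have hcv : c ≤ z v (r + 1 - 1) := (tabOf_le_iff h hz hc' hvn).mp le_rfl
    have hr11 : r + 1 - 1 = r := by omega
    rw [hr11] at hcv
    have hstep : z v r ≤ z (v - 1) (r - 1) := by
      have := hz.2.2.2.1 (v - 1) (by omega) (r - 1) (by omega)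
      have hv' : v - 1 + 1 = v := by omega
      have hr' : r - 1 + 1 = r := by omega
      rwa [hv', hr'] at this
    have : tabOf m n P Q z (r, c) ≤ v - 1 := by
      rw [tabOf_le_iff h hz hc (by omega)]
      exact hcv.trans hstep
    omega
  · intro x hx
    unfold tabOf
    rw [if_neg hx]

lemma tabOf_gtOf (h : ShapeHyps m n P Q) (hT : IsSSYT m n P Q T) :
    tabOf m n P Q (gtOf m n P Q T) = T := by
  have hg := gtOf_isGT h hT
  have hS := tabOf_isSSYT h hg
  funext x
  by_cases hx : x ∈ cells m P Q
  · obtain ⟨r, c⟩ := x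
    have hA := (hS.1 _ hx).2
    have hB := (hT.1 _ hx).2
    have key : ∀ i, i ≤ n → (tabOf m n P Q (gtOf m n P Q T) (r, c) ≤ i ↔ T (r, c) ≤ i) :=
      fun i hi => (tabOf_le_iff h hg hx hi).trans (gtOf_le_iff h hT hx hi).symm
    exact le_antisymm ((key _ hB).mpr le_rfl) ((key _ hA).mp le_rfl)
  · unfold tabOf
    rw [if_neg hx, (hT.2.2.2 x hx).symm]

lemma gtOf_tabOf (h : ShapeHyps m n P Q) (hz : IsGT m n P Q z) :
    gtOf m n P Q (tabOf m n P Q z) = z := by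
  have hS := tabOf_isSSYT h hz
  funext i q
  by_cases hiq : i ≤ n ∧ q < m
  · obtain ⟨hi, hq⟩ := hiq
    unfold gtOf
    rw [if_pos ⟨hi, hq⟩]
    have hq1 : q + 1 - 1 = q := by omega
    have hfe : (Finset.Icc (Q (q + 1) + 1) (P (q + 1))).filter
        (fun c => 1 ≤ tabOf m n P Q z (q + 1, c) ∧ tabOf m n P Q z (q + 1, c) ≤ i)
        = Finset.Icc (Q (q + 1) + 1) (z i q) := by
      ext c
      simp only [Finset.mem_filter, Finset.mem_Icc]
      constructor
      · rintro ⟨⟨hc1, hc2⟩, _, hTi⟩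
        have hcell : (q + 1, c) ∈ cells m P Q :=
          (mem_cells h).mpr ⟨by omega, by omega, by omega, hc2⟩
        have := (tabOf_le_iff h hz hcell hi).mp hTi
        rw [hq1] at this
        exact ⟨hc1, this⟩
      · rintro ⟨hc1, hc2⟩
        have hcP : c ≤ P (q + 1) := hc2.trans (hz.le_P hi hq)
        have hcell : (q + 1, c) ∈ cells m P Q :=
          (mem_cells h).mpr ⟨by omega, by omega, by omega, hcP⟩
        have hT1 : tabOf m n P Q z (q + 1, c) ≤ i := by
          rw [tabOf_le_iff h hz hcell hi, hq1]
          exact hc2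
        exact ⟨⟨hc1, hcP⟩, (hS.1 _ hcell).1, hT1⟩
    rw [hfe, Int.card_Icc]
    have := hz.Q_le hi hq
    omega
  · unfold gtOf
    rw [if_neg hiq, hz.2.2.2.2 i q (by omega)]

lemma cnt_gtOf (h : ShapeHyps m n P Q) (hT : IsSSYT m n P Q T) {i : ℕ}
    (hi1 : 1 ≤ i) (hin : i ≤ n) :
    cnt m i (gtOf m n P Q T) = (entryCount m P Q T i : ℤ) := by
  have hrow : ∀ q < m, gtOf m n P Q T i q - gtOf m n P Q T (i - 1) q
      = (((Finset.Icc (Q (q + 1) + 1) (P (q + 1))).filter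
          (fun c => T (q + 1, c) = i)).card : ℤ) := by
    intro q hq
    unfold gtOf
    rw [if_pos ⟨hin, hq⟩, if_pos ⟨by omega, hq⟩]
    have hun : (Finset.Icc (Q (q + 1) + 1) (P (q + 1))).filter
          (fun c => 1 ≤ T (q + 1, c) ∧ T (q + 1, c) ≤ i)
        = ((Finset.Icc (Q (q + 1) + 1) (P (q + 1))).filter
          (fun c => 1 ≤ T (q + 1, c) ∧ T (q + 1, c) ≤ i - 1))
        ∪ ((Finset.Icc (Q (q + 1) + 1) (P (q + 1))).filter
          (fun c => T (q + 1, c) = i)) := by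
      rw [← Finset.filter_or]
      apply Finset.filter_congr
      intro c _
      constructor
      · intro hc; omega
      · intro hc; omega
    have hdisj : Disjoint ((Finset.Icc (Q (q + 1) + 1) (P (q + 1))).filter
          (fun c => 1 ≤ T (q + 1, c) ∧ T (q + 1, c) ≤ i - 1))
        ((Finset.Icc (Q (q + 1) + 1) (P (q + 1))).filter
          (fun c => T (q + 1, c) = i)) := by
      rw [Finset.disjoint_left]
      intro c hc1 hc2
      rw [Finset.mem_filter] at hc1 hc2
      omega
    rw [hun, Finset.card_union_of_disjoint hdisj]
    push_cast
    ring
  have hcnt : cnt m i (gtOf m n P Q T)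
      = ∑ q ∈ Finset.range m, (((Finset.Icc (Q (q + 1) + 1) (P (q + 1))).filter
          (fun c => T (q + 1, c) = i)).card : ℤ) := by
    unfold cnt
    rw [← Finset.sum_sub_distrib]
    apply Finset.sum_congr rfl
    intro q hq
    exact hrow q (Finset.mem_range.mp hq)
  rw [hcnt]
  unfold entryCount
  have hbi : (cells m P Q).filter (fun x => T x = i)
      = (Finset.range m).biUnion (fun q => ((Finset.Icc (Q (q + 1) + 1) (P (q + 1))).filter
          (fun c => T (q + 1, c) = i)).image (fun c => (q + 1, c))) := by
    ext x
    obtain ⟨r, c⟩ := x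
    simp only [Finset.mem_filter, Finset.mem_biUnion, Finset.mem_range, Finset.mem_image,
      Finset.mem_Icc, mem_cells h]
    constructor
    · rintro ⟨⟨hr1, hrm, hQc, hcP⟩, hTc⟩
      have hrr : r - 1 + 1 = r := by omega
      refine ⟨r - 1, by omega, c, ?_, by rw [hrr]⟩
      rw [hrr]
      exact ⟨⟨by omega, hcP⟩, hTc⟩
    · rintro ⟨q, hqm, c', ⟨⟨hc1, hc2⟩, hTc⟩, heq⟩
      obtain ⟨rfl, rfl⟩ : q + 1 = r ∧ c' = c := by
        exact ⟨congrArg Prod.fst heq, congrArg Prod.snd heq⟩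
      exact ⟨⟨by omega, by omega, by omega, hc2⟩, hTc⟩
  rw [hbi, Finset.card_biUnion]
  · push_cast
    apply Finset.sum_congr rfl
    intro q _
    rw [Finset.card_image_of_injective]
    intro a b hab
    exact (Prod.mk.injEq _ _ _ _).mp hab |>.2
  · intro q1 _ q2 _ hne
    rw [Function.onFun, Finset.disjoint_left]
    rintro ⟨r, c⟩ h1 h2
    simp only [Finset.mem_image] at h1 h2
    obtain ⟨c1, _, he1⟩ := h1
    obtain ⟨c2, _, he2⟩ := h2
    have : q1 + 1 = r := congrArg Prod.fst he1
    have : q2 + 1 = r := congrArg Prod.fst he2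
    omega

end Bij


/-! ### Finiteness -/

section Fin

variable {m n : ℕ} {P Q : ℕ → ℤ}

lemma finite_SSYT (h : ShapeHyps m n P Q) : {T : ℕ × ℤ → ℕ | IsSSYT m n P Q T}.Finite := by
  rw [← Set.finite_coe_iff]
  have hinj : Function.Injective
      (fun (T : {T : ℕ × ℤ → ℕ | IsSSYT m n P Q T}) (x : (cells m P Q : Finset (ℕ × ℤ))) =>
        (⟨T.1 x.1, by
          have hT : IsSSYT m n P Q T.1 := T.2
          have := (hT.1 x.1 x.2).2
          omega⟩ : Fin (n + 1))) := by
    intro T1 T2 he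
    apply Subtype.ext
    funext x
    by_cases hx : x ∈ cells m P Q
    · have := congrArg Fin.val (congrFun he ⟨x, hx⟩)
      simpa using this
    · have h1 : IsSSYT m n P Q T1.1 := T1.2
      have h2 : IsSSYT m n P Q T2.1 := T2.2
      rw [h1.2.2.2 x hx, h2.2.2.2 x hx]
  exact Finite.of_injective _ hinj

lemma finite_GT (h : ShapeHyps m n P Q) : {z : ℕ → ℕ → ℤ | IsGT m n P Q z}.Finite := by
  rw [← Set.finite_coe_iff]
  have hfin : Finite (Set.Icc (0 : ℤ) (P 1)) := (Set.finite_Icc _ _).to_subtype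
  have hinj : Function.Injective
      (fun (z : {z : ℕ → ℕ → ℤ | IsGT m n P Q z}) (p : Fin (n + 1) × Fin m) =>
        (⟨z.1 p.1 p.2, by
          have hz : IsGT m n P Q z.1 := z.2
          have hi : (p.1 : ℕ) ≤ n := by omega
          have hq : (p.2 : ℕ) < m := p.2.isLt
          constructor
          · exact (h.Q_nonneg (by omega) (by omega)).trans (hz.Q_le hi hq)
          · exact (hz.le_P hi hq).trans (h.P_anti 1 ((p.2 : ℕ) + 1) le_rfl (by omega) (by omega))
          ⟩ : Set.Icc (0 : ℤ) (P 1))) := by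
    intro z1 z2 he
    have h1 : IsGT m n P Q z1.1 := z1.2
    have h2 : IsGT m n P Q z2.1 := z2.2
    apply Subtype.ext
    funext i q
    by_cases hiq : i ≤ n ∧ q < m
    · have := congrArg Subtype.val (congrFun he (⟨i, by omega⟩, ⟨q, by omega⟩))
      simpa using this
    · rw [h1.2.2.2.2 i q (by omega), h2.2.2.2.2 i q (by omega)]
  exact Finite.of_injective _ hinj

lemma skewSchur_eq (h : ShapeHyps m n P Q) {Z : Finset (ℕ → ℕ → ℤ)}
    (hZ : ∀ z, z ∈ Z ↔ IsGT m n P Q z) :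
    skewSchur m n P Q
      = ∑ z ∈ Z, ∏ i : Fin n, MvPolynomial.X i ^ (cnt m ((i : ℕ) + 1) z).toNat := by
  unfold skewSchur
  rw [← Set.Finite.coe_toFinset (finite_SSYT h), finsum_mem_coe_finset]
  refine Finset.sum_nbij' (i := gtOf m n P Q) (j := tabOf m n P Q) ?_ ?_ ?_ ?_ ?_
  · intro T hT
    rw [Set.Finite.mem_toFinset] at hT
    exact (hZ _).mpr (gtOf_isGT h hT)
  · intro z hz
    rw [hZ] at hz
    rw [Set.Finite.mem_toFinset]
    exact tabOf_isSSYT h hz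
  · intro T hT
    rw [Set.Finite.mem_toFinset] at hT
    exact tabOf_gtOf h hT
  · intro z hz
    rw [hZ] at hz
    exact gtOf_tabOf h hz
  · intro T hT
    rw [Set.Finite.mem_toFinset] at hT
    apply Finset.prod_congr rfl
    intro i _
    congr 1
    have := cnt_gtOf h hT (i := (i : ℕ) + 1) (by omega) (by omega)
    rw [this, Int.toNat_natCast]

end Fin


/-! ### Bender–Knuth flips on GT parallelograms -/

/-- Lower bound for the entry `z k q` in terms of the neighboring rows. -/
def Lb (m : ℕ) (z : ℕ → ℕ → ℤ) (k q : ℕ) : ℤ :=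
  if q + 1 < m then max (z (k - 1) q) (z (k + 1) (q + 1)) else z (k - 1) q

/-- Upper bound for the entry `z k q` in terms of the neighboring rows. -/
def Ub (z : ℕ → ℕ → ℤ) (k q : ℕ) : ℤ :=
  if q = 0 then z (k + 1) 0 else min (z (k - 1) (q - 1)) (z (k + 1) q)

/-- Replace row `k` by `w`. -/
def updRow (m k : ℕ) (z : ℕ → ℕ → ℤ) (w : ℕ → ℤ) : ℕ → ℕ → ℤ :=
  fun i q => if i = k ∧ q < m then w q else z i q

section Flip

variable {m n : ℕ} {P Q : ℕ → ℤ} {z : ℕ → ℕ → ℤ} {k : ℕ} {w : ℕ → ℤ}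

lemma Lb_le (hz : IsGT m n P Q z) (hk1 : 1 ≤ k) (hkn : k < n) {q : ℕ} (hq : q < m) :
    Lb m z k q ≤ z k q := by
  unfold Lb
  have h1 : z (k - 1) q ≤ z k q := by
    have := hz.2.2.1 (k - 1) (by omega) q hq
    rwa [(show k - 1 + 1 = k by omega)] at this
  split_ifs with hq1
  · exact max_le h1 (hz.2.2.2.1 k (by omega) q hq1)
  · exact h1

lemma le_Ub (hz : IsGT m n P Q z) (hk1 : 1 ≤ k) (hkn : k < n) {q : ℕ} (hq : q < m) :
    z k q ≤ Ub z k q := by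
  unfold Ub
  have h1 : z k q ≤ z (k + 1) q := hz.2.2.1 k (by omega) q hq
  split_ifs with hq0
  · subst hq0; exact h1
  · refine le_min ?_ h1
    have := hz.2.2.2.1 (k - 1) (by omega) (q - 1) (by omega)
    rwa [(show k - 1 + 1 = k by omega), (show q - 1 + 1 = q by omega)] at this

lemma updRow_isGT (hz : IsGT m n P Q z) (hk1 : 1 ≤ k) (hkn : k < n)
    (hw : ∀ q, q < m → Lb m z k q ≤ w q ∧ w q ≤ Ub z k q) :
    IsGT m n P Q (updRow m k z w) := by
  obtain ⟨hz1, hz2, hz3, hz4, hz5⟩ := hz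
  refine ⟨?_, ?_, ?_, ?_, ?_⟩
  · intro q hq
    unfold updRow; rw [if_neg (by omega)]; exact hz1 q hq
  · intro q hq
    unfold updRow; rw [if_neg (by omega)]; exact hz2 q hq
  · intro i hi q hq
    unfold updRow
    by_cases hik : i = k
    · subst hik
      rw [if_pos ⟨rfl, hq⟩, if_neg (by omega)]
      have := (hw q hq).2
      unfold Ub at this
      split_ifs at this with hq0
      · subst hq0; exact this
      · exact this.trans (min_le_right _ _)
    · by_cases hik1 : i + 1 = k
      · rw [if_neg (by omega), if_pos ⟨hik1, hq⟩]
        have := (hw q hq).1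
        unfold Lb at this
        have hik' : k - 1 = i := by omega
        rw [hik'] at this
        split_ifs at this with hq1
        · exact le_trans (le_max_left _ _) this
        · exact this
      · rw [if_neg (by omega), if_neg (by omega)]
        exact hz3 i hi q hq
  · intro i hi q hq1
    unfold updRow
    by_cases hik : i = k
    · subst hik
      rw [if_neg (by omega), if_pos ⟨rfl, by omega⟩]
      have := (hw q (by omega)).1
      unfold Lb at this
      rw [if_pos hq1] at this
      exact le_trans (le_max_right _ _) this
    · by_cases hik1 : i + 1 = k
      · rw [if_pos ⟨hik1, by omega⟩, if_neg (by omega)]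
        have := (hw (q + 1) hq1).2
        unfold Ub at this
        rw [if_neg (by omega)] at this
        have h2 : z (k - 1) (q + 1 - 1) = z i q := by
          rw [(show q + 1 - 1 = q by omega), (show k - 1 = i by omega)]
        exact this.trans ((min_le_left _ _).trans_eq h2)
      · rw [if_neg (by omega), if_neg (by omega)]
        exact hz4 i hi q hq1
  · intro i q hioq
    unfold updRow
    rw [if_neg (by omega)]
    exact hz5 i q hioq

lemma sum_LbUb :
    ∀ p, p < m → ∑ q ∈ Finset.Ico p m, (Lb m z k q + Ub z k q)
      = Ub z k p + ∑ q ∈ Finset.Ico p m, z (k - 1) q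
        + ∑ q ∈ Finset.Ico (p + 1) m, z (k + 1) q := by
  have key : ∀ d p, p < m → m - p = d + 1 →
      ∑ q ∈ Finset.Ico p m, (Lb m z k q + Ub z k q)
        = Ub z k p + ∑ q ∈ Finset.Ico p m, z (k - 1) q
          + ∑ q ∈ Finset.Ico (p + 1) m, z (k + 1) q := by
    intro d
    induction d with
    | zero =>
      intro p hp hd
      have hm : m = p + 1 := by omega
      subst hm
      rw [Finset.Ico_self, Finset.sum_empty]
      rw [(show Finset.Ico p (p + 1) = {p} by
        ext x; simp only [Finset.mem_Ico, Finset.mem_singleton]; omega)]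
      rw [Finset.sum_singleton, Finset.sum_singleton]
      have hLb : Lb (p + 1) z k p = z (k - 1) p := by
        unfold Lb; rw [if_neg (by omega)]
      rw [hLb]; ring
    | succ d ih =>
      intro p hp hd
      have hp1 : p + 1 < m := by omega
      rw [Finset.sum_eq_sum_Ico_succ_bot (by omega : p < m),
        Finset.sum_eq_sum_Ico_succ_bot (by omega : p < m) (f := fun q => z (k - 1) q),
        Finset.sum_eq_sum_Ico_succ_bot (by omega : p + 1 < m) (f := fun q => z (k + 1) q),
        ih (p + 1) hp1 (by omega)]
      have hpair : Lb m z k p + Ub z k (p + 1) = z (k - 1) p + z (k + 1) (p + 1) := by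
        unfold Lb Ub
        rw [if_pos hp1, if_neg (by omega), (show p + 1 - 1 = p by omega)]
        rw [add_comm]
        exact min_add_max _ _
      linarith
  intro p hp
  exact key (m - p - 1) p hp (by omega)

lemma updRow_apply_ne {i q : ℕ} (hik : i ≠ k) : updRow m k z w i q = z i q := by
  unfold updRow; rw [if_neg (by tauto)]

lemma updRow_apply_k {q : ℕ} (hq : q < m) : updRow m k z w k q = w q := by
  unfold updRow; rw [if_pos ⟨rfl, hq⟩]

lemma sum_updRow_k : ∑ q ∈ Finset.range m, updRow m k z w k q = ∑ q ∈ Finset.range m, w q := by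
  apply Finset.sum_congr rfl
  intro q hq
  exact updRow_apply_k (Finset.mem_range.mp hq)

lemma cnt_updRow_ne (hk1 : 1 ≤ k) {i : ℕ} (hik : i ≠ k) (hik1 : i ≠ k + 1) :
    cnt m i (updRow m k z w) = cnt m i z := by
  unfold cnt
  congr 1
  · exact Finset.sum_congr rfl fun q _ => updRow_apply_ne hik
  · exact Finset.sum_congr rfl fun q _ => updRow_apply_ne (by omega)

lemma cnt_updRow_k (hk1 : 1 ≤ k) :
    cnt m k (updRow m k z w)
      = ∑ q ∈ Finset.range m, w q - ∑ q ∈ Finset.range m, z (k - 1) q := by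
  unfold cnt
  rw [sum_updRow_k]
  congr 1
  exact Finset.sum_congr rfl fun q _ => updRow_apply_ne (by omega)

lemma cnt_updRow_k1 :
    cnt m (k + 1) (updRow m k z w)
      = ∑ q ∈ Finset.range m, z (k + 1) q - ∑ q ∈ Finset.range m, w q := by
  unfold cnt
  rw [(show k + 1 - 1 = k by omega), sum_updRow_k]
  congr 1
  exact Finset.sum_congr rfl fun q _ => updRow_apply_ne (by omega)

/-- The Bender–Knuth involution at row `k`. -/
def bkFlip (m k : ℕ) (z : ℕ → ℕ → ℤ) : ℕ → ℕ → ℤ :=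
  updRow m k z (fun q => Lb m z k q + Ub z k q - z k q)

lemma bkFlip_isGT (hz : IsGT m n P Q z) (hk1 : 1 ≤ k) (hkn : k < n) :
    IsGT m n P Q (bkFlip m k z) := by
  apply updRow_isGT hz hk1 hkn
  intro q hq
  have h1 := Lb_le hz hk1 hkn hq
  have h2 := le_Ub hz hk1 hkn hq
  constructor <;> linarith

lemma bkFlip_rows (hk1 : 1 ≤ k) :
    (∀ q, bkFlip m k z (k - 1) q = z (k - 1) q) ∧ (∀ q, bkFlip m k z (k + 1) q = z (k + 1) q) :=
  ⟨fun q => updRow_apply_ne (by omega), fun q => updRow_apply_ne (by omega)⟩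

lemma Lb_bkFlip (hk1 : 1 ≤ k) : Lb m (bkFlip m k z) k = Lb m z k := by
  funext q
  unfold Lb
  rw [(bkFlip_rows hk1).1, (bkFlip_rows hk1).2]

lemma Ub_bkFlip (hk1 : 1 ≤ k) : Ub (bkFlip m k z) k = Ub z k := by
  funext q
  unfold Ub
  rw [(bkFlip_rows hk1).1, (bkFlip_rows hk1).2, (bkFlip_rows hk1).2]

lemma bkFlip_bkFlip (hk1 : 1 ≤ k) : bkFlip m k (bkFlip m k z) = z := by
  funext i q
  by_cases hiq : i = k ∧ q < m
  · obtain ⟨hik, hq⟩ := hiq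
    subst hik
    have h1 : bkFlip m i (bkFlip m i z) i q
        = Lb m (bkFlip m i z) i q + Ub (bkFlip m i z) i q - bkFlip m i z i q :=
      updRow_apply_k hq
    rw [h1, Lb_bkFlip hk1, Ub_bkFlip hk1,
      (show bkFlip m i z i q = Lb m z i q + Ub z i q - z i q from updRow_apply_k hq)]
    ring
  · show updRow m k (bkFlip m k z) _ i q = z i q
    rw [updRow, if_neg hiq]
    show updRow m k z _ i q = z i q
    rw [updRow, if_neg hiq]

lemma sum_bkFlip (hm : 0 < m) :
    ∑ q ∈ Finset.range m, bkFlip m k z k q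
      = ∑ q ∈ Finset.range m, z (k - 1) q + ∑ q ∈ Finset.range m, z (k + 1) q
        - ∑ q ∈ Finset.range m, z k q := by
  unfold bkFlip
  rw [sum_updRow_k, Finset.sum_sub_distrib]
  have h1 : ∑ q ∈ Finset.range m, (Lb m z k q + Ub z k q)
      = ∑ q ∈ Finset.range m, z (k - 1) q + ∑ q ∈ Finset.range m, z (k + 1) q := by
    rw [Finset.range_eq_Ico, sum_LbUb 0 hm]
    have hU0 : Ub z k 0 = z (k + 1) 0 := by unfold Ub; rw [if_pos rfl]
    have h2 : ∑ q ∈ Finset.Ico 0 m, z (k + 1) q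
        = z (k + 1) 0 + ∑ q ∈ Finset.Ico (0 + 1) m, z (k + 1) q :=
      Finset.sum_eq_sum_Ico_succ_bot hm _
    rw [hU0]
    linarith
  rw [Finset.sum_add_distrib] at h1
  rw [Finset.sum_add_distrib]
  linarith

lemma cnt_bkFlip_k (hm : 0 < m) (hk1 : 1 ≤ k) :
    cnt m k (bkFlip m k z) = cnt m (k + 1) z := by
  unfold bkFlip
  rw [cnt_updRow_k hk1]
  show _ = cnt m (k + 1) z
  unfold cnt
  rw [(show k + 1 - 1 = k by omega)]
  have := sum_bkFlip (z := z) (k := k) hm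
  unfold bkFlip at this
  rw [sum_updRow_k] at this
  linarith

lemma cnt_bkFlip_k1 (hm : 0 < m) (hk1 : 1 ≤ k) :
    cnt m (k + 1) (bkFlip m k z) = cnt m k z := by
  unfold bkFlip
  rw [cnt_updRow_k1]
  unfold cnt
  have := sum_bkFlip (z := z) (k := k) hm
  unfold bkFlip at this
  rw [sum_updRow_k] at this
  linarith

end Flip


/-! ### Symmetry of the GT generating polynomial -/

section Symm

variable {m n : ℕ} {P Q : ℕ → ℤ}

/-- There is a pair of mutually inverse bijections of the set of GT parallelograms
permuting the entry counts by `σ`. -/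
def SymProp (m n : ℕ) (Z : Finset (ℕ → ℕ → ℤ)) (σ : Equiv.Perm (Fin n)) : Prop :=
  ∃ Φ Ψ : (ℕ → ℕ → ℤ) → (ℕ → ℕ → ℤ),
    (∀ z ∈ Z, Φ z ∈ Z) ∧ (∀ z ∈ Z, Ψ z ∈ Z) ∧ (∀ z ∈ Z, Ψ (Φ z) = z) ∧
    (∀ z ∈ Z, Φ (Ψ z) = z) ∧
    (∀ z ∈ Z, ∀ j : Fin n, cnt m ((j : ℕ) + 1) (Φ z) = cnt m (((σ j : Fin n) : ℕ) + 1) z)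

variable {Z : Finset (ℕ → ℕ → ℤ)}

lemma symProp_one : SymProp m n Z 1 :=
  ⟨id, id, fun _ hz => hz, fun _ hz => hz, fun _ _ => rfl, fun _ _ => rfl, fun _ _ _ => rfl⟩

lemma symProp_mul {σ τ : Equiv.Perm (Fin n)} (hσ : SymProp m n Z σ) (hτ : SymProp m n Z τ) :
    SymProp m n Z (σ * τ) := by
  obtain ⟨Φσ, Ψσ, h1, h2, h3, h4, h5⟩ := hσ
  obtain ⟨Φτ, Ψτ, g1, g2, g3, g4, g5⟩ := hτ
  refine ⟨Φτ ∘ Φσ, Ψσ ∘ Ψτ, fun z hz => g1 _ (h1 z hz), fun z hz => h2 _ (g2 z hz),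
    ?_, ?_, ?_⟩
  · intro z hz
    simp only [Function.comp_apply]
    rw [g3 _ (h1 z hz), h3 z hz]
  · intro z hz
    simp only [Function.comp_apply]
    rw [h4 _ (g2 z hz), g4 z hz]
  · intro z hz j
    simp only [Function.comp_apply, Equiv.Perm.mul_apply]
    rw [g5 _ (h1 z hz) j, h5 z hz (τ j)]

lemma symProp_inv {σ : Equiv.Perm (Fin n)} (hσ : SymProp m n Z σ) : SymProp m n Z σ⁻¹ := by
  obtain ⟨Φ, Ψ, h1, h2, h3, h4, h5⟩ := hσ
  refine ⟨Ψ, Φ, h2, h1, h4, h3, ?_⟩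
  intro z hz j
  have := h5 (Ψ z) (h2 z hz) (σ⁻¹ j)
  rw [h4 z hz] at this
  rw [(show σ (σ⁻¹ j) = j from σ.apply_symm_apply j)] at this
  exact this.symm

lemma symProp_adjacent (h : ShapeHyps m n P Q) (hZ : ∀ z, z ∈ Z ↔ IsGT m n P Q z)
    {k : ℕ} (hk1 : 1 ≤ k) (hkn : k < n) :
    SymProp m n Z (Equiv.swap (⟨k - 1, Nat.lt_of_le_of_lt (Nat.sub_le k 1) hkn⟩ : Fin n) (⟨k, hkn⟩ : Fin n)) := by
  have hm : 0 < m := by have := h.1; have := h.2.1; omega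
  refine ⟨bkFlip m k, bkFlip m k, ?_, ?_, ?_, ?_, ?_⟩
  · intro z hz; rw [hZ] at *; exact bkFlip_isGT hz hk1 hkn
  · intro z hz; rw [hZ] at *; exact bkFlip_isGT hz hk1 hkn
  · intro z _; exact bkFlip_bkFlip hk1
  · intro z _; exact bkFlip_bkFlip hk1
  · intro z hz j
    by_cases hja : j = (⟨k - 1, by omega⟩ : Fin n)
    · subst hja
      rw [Equiv.swap_apply_left]
      simp only
      rw [(show k - 1 + 1 = k by omega)]
      exact cnt_bkFlip_k hm hk1
    · by_cases hjb : j = (⟨k, hkn⟩ : Fin n)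
      · subst hjb
        rw [Equiv.swap_apply_right]
        simp only
        rw [(show k - 1 + 1 = k by omega)]
        exact cnt_bkFlip_k1 hm hk1
      · rw [Equiv.swap_apply_of_ne_of_ne hja hjb]
        apply cnt_updRow_ne hk1
        · intro hc
          apply hja
          apply Fin.ext
          simp only
          omega
        · intro hc
          apply hjb
          apply Fin.ext
          simp only
          omega

lemma symProp_swap (h : ShapeHyps m n P Q) (hZ : ∀ z, z ∈ Z ↔ IsGT m n P Q z)
    (a b : Fin n) : SymProp m n Z (Equiv.swap a b) := by
  have main : ∀ d : ℕ, ∀ a b : Fin n, (a : ℕ) < (b : ℕ) → (b : ℕ) - (a : ℕ) = d →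
      SymProp m n Z (Equiv.swap a b) := by
    intro d
    induction d using Nat.strong_induction_on with
    | _ d ih =>
      intro a b hab hd
      by_cases hd1 : d = 1
      · subst hd1
        have hadj := symProp_adjacent h hZ (k := (a : ℕ) + 1) (by omega) (by omega)
        have ha : (⟨(a : ℕ) + 1 - 1, by omega⟩ : Fin n) = a := by
          apply Fin.ext
          show (a : ℕ) + 1 - 1 = (a : ℕ)
          omega
        have hb : (⟨(a : ℕ) + 1, by omega⟩ : Fin n) = b := by
          apply Fin.ext
          show (a : ℕ) + 1 = (b : ℕ)
          omega
        rwa [ha, hb] at hadj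
      · have hd2 : 2 ≤ d := by omega
        set c : Fin n := ⟨(b : ℕ) - 1, by omega⟩ with hcdef
        have hac : a ≠ c := by
          intro hcon
          have := congrArg Fin.val hcon
          simp only [hcdef] at this
          omega
        have hab' : a ≠ b := by
          intro hcon
          have := congrArg Fin.val hcon
          omega
        have hkey : Equiv.swap c b * Equiv.swap a c * Equiv.swap c b = Equiv.swap b a :=
          Equiv.swap_mul_swap_mul_swap hac hab'
        have hswap : Equiv.swap a b = Equiv.swap c b * Equiv.swap a c * Equiv.swap c b := by
          rw [hkey, Equiv.swap_comm]
        rw [hswap]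
        have hcb : SymProp m n Z (Equiv.swap c b) := by
          apply ih 1 (by omega) c b (by simp only [hcdef]; omega)
            (by simp only [hcdef]; omega)
        have hac' : SymProp m n Z (Equiv.swap a c) := by
          apply ih (d - 1) (by omega) a c (by simp only [hcdef]; omega)
            (by simp only [hcdef]; omega)
        exact symProp_mul (symProp_mul hcb hac') hcb
  rcases lt_trichotomy ((a : ℕ)) ((b : ℕ)) with hab | hab | hab
  · exact main _ a b hab rfl
  · have : a = b := Fin.ext hab
    subst this
    rw [Equiv.swap_self]
    exact symProp_one
  · rw [Equiv.swap_comm]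
    exact main _ b a hab rfl

lemma symProp_all (h : ShapeHyps m n P Q) (hZ : ∀ z, z ∈ Z ↔ IsGT m n P Q z)
    (σ : Equiv.Perm (Fin n)) : SymProp m n Z σ := by
  have hmem : σ ∈ Subgroup.closure {τ : Equiv.Perm (Fin n) | τ.IsSwap} := by
    rw [Equiv.Perm.closure_isSwap]
    exact Subgroup.mem_top σ
  refine Subgroup.closure_induction ?_ ?_ ?_ ?_ hmem
  · rintro τ ⟨a, b, _, rfl⟩
    exact symProp_swap h hZ a b
  · exact symProp_one
  · intro τ₁ τ₂ _ _ h1 h2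
    exact symProp_mul h1 h2
  · intro τ _ h1
    exact symProp_inv h1

lemma sum_alt_eq (h : ShapeHyps m n P Q) (hZ : ∀ z, z ∈ Z ↔ IsGT m n P Q z)
    (γ : Fin n → ℕ) :
    ∑ z ∈ Z, alt n (fun j => γ j + (cnt m ((j : ℕ) + 1) z).toNat)
      = alt n γ * ∑ z ∈ Z, ∏ j : Fin n, MvPolynomial.X j ^ (cnt m ((j : ℕ) + 1) z).toNat := by
  unfold alt
  have hdet : ∀ (μ : Fin n → ℕ),
      Matrix.det (Matrix.of fun i j : Fin n => (MvPolynomial.X i : MvPolynomial (Fin n) ℤ) ^ μ j)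
        = ∑ σ : Equiv.Perm (Fin n),
            ((Equiv.Perm.sign σ : ℤ) : MvPolynomial (Fin n) ℤ)
              * ∏ j : Fin n, MvPolynomial.X (σ j) ^ μ j := by
    intro μ
    rw [Matrix.det_apply']
    apply Finset.sum_congr rfl
    intro σ _
    push_cast
    rfl
  simp only [hdet]
  rw [Finset.sum_comm, Finset.sum_mul]
  apply Finset.sum_congr rfl
  intro σ _
  rw [mul_assoc, Finset.mul_sum, ← Finset.mul_sum]
  congr 1
  obtain ⟨Φ, Ψ, m1, m2, m3, m4, m5⟩ := symProp_all h hZ σ⁻¹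
  refine Finset.sum_nbij' (i := Φ) (j := Ψ) m1 m2 m3 m4 ?_
  intro z hz
  have hcz : ∀ j : Fin n, (cnt m ((j : ℕ) + 1) (Φ z)).toNat
      = (cnt m (((σ⁻¹ j : Fin n) : ℕ) + 1) z).toNat := fun j => by rw [m5 z hz j]
  simp only [pow_add, Finset.prod_mul_distrib]
  congr 1
  simp only [hcz]
  apply Fintype.prod_equiv σ
  intro x
  rw [show σ⁻¹ (σ x) = x from σ.symm_apply_apply x]

end Symm


/-! ### The cancellation involution -/

/-- `η` extended to `ℕ`, as an integer-valued function. -/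
def etaZ (n : ℕ) (η : Fin n → ℕ) (k : ℕ) : ℤ := if h : k < n then (η ⟨k, h⟩ : ℤ) else 0

/-- `G_k = η_k - η_{k+1} + 1 = γ_k - γ_{k+1}`. -/
def Gg (n : ℕ) (η : Fin n → ℕ) (k : ℕ) : ℤ := etaZ n η (k - 1) - etaZ n η k + 1

/-- The prefix sum in `dstat`. -/
def Dpre (z : ℕ → ℕ → ℤ) (k p : ℕ) : ℤ :=
  ∑ q ∈ Finset.range p, (2 * z k q - z (k - 1) q - z (k + 1) q)

lemma dstat_eq (z : ℕ → ℕ → ℤ) (k p : ℕ) :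
    dstat z k p = Dpre z k p + z k p - z (k + 1) p := rfl

lemma Dpre_expand (z : ℕ → ℕ → ℤ) (k p : ℕ) :
    Dpre z k p = 2 * ∑ q ∈ Finset.range p, z k q - ∑ q ∈ Finset.range p, z (k - 1) q
      - ∑ q ∈ Finset.range p, z (k + 1) q := by
  unfold Dpre
  rw [Finset.sum_sub_distrib, Finset.sum_sub_distrib, ← Finset.mul_sum]

/-- The reflection point. -/
def betaV (n : ℕ) (η : Fin n → ℕ) (z : ℕ → ℕ → ℤ) (k p : ℕ) : ℤ :=
  z (k + 1) p - Gg n η k - Dpre z k p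

/-- A violation of the `η`-ballot condition. -/
def Viol (m n : ℕ) (η : Fin n → ℕ) (z : ℕ → ℕ → ℤ) (k p : ℕ) : Prop :=
  1 ≤ k ∧ k < n ∧ p < m ∧ dstat z k p ≤ -(Gg n η k)

/-- Admissibility. -/
def AdmP (m n : ℕ) (η : Fin n → ℕ) (z : ℕ → ℕ → ℤ) : Prop :=
  ∀ k p : ℕ, 1 ≤ k → k < n → p < m → -(etaZ n η (k - 1) - etaZ n η k) ≤ dstat z k p

lemma not_admP_iff {m n : ℕ} {η : Fin n → ℕ} {z : ℕ → ℕ → ℤ} :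
    ¬ AdmP m n η z ↔ ∃ p k, Viol m n η z k p := by
  unfold AdmP Viol Gg
  push_neg
  constructor
  · rintro ⟨k, p, hk1, hkn, hpm, hd⟩
    exact ⟨p, k, hk1, hkn, hpm, by omega⟩
  · rintro ⟨p, k, hk1, hkn, hpm, hd⟩
    exact ⟨k, p, hk1, hkn, hpm, by omega⟩

/-- Position of the first violation. -/
noncomputable def pst (m n : ℕ) (η : Fin n → ℕ) (z : ℕ → ℕ → ℤ) : ℕ :=
  sInf {p | ∃ k, Viol m n η z k p}

/-- Largest violating row at the first violating position. -/
noncomputable def kst (m n : ℕ) (η : Fin n → ℕ) (z : ℕ → ℕ → ℤ) : ℕ :=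
  Nat.findGreatest (fun k => Viol m n η z k (pst m n η z)) n

/-- Partial Bender–Knuth flip of row `k`: reflect positions `> p` fully and
reflect position `p` into `[Lb, β]`. -/
def flipAt (m k p : ℕ) (β : ℤ) (z : ℕ → ℕ → ℤ) : ℕ → ℕ → ℤ :=
  updRow m k z (fun q =>
    if q < p then z k q
    else if q = p then Lb m z k p + β - z k p
    else Lb m z k q + Ub z k q - z k q)

/-- The involution on non-admissible parallelograms. -/
noncomputable def theFlip (m n : ℕ) (η : Fin n → ℕ) (z : ℕ → ℕ → ℤ) : ℕ → ℕ → ℤ :=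
  flipAt m (kst m n η z) (pst m n η z) (betaV n η z (kst m n η z) (pst m n η z)) z

section Cancel

variable {m n : ℕ} {P Q : ℕ → ℤ} {η : Fin n → ℕ} {z : ℕ → ℕ → ℤ} {k p : ℕ} {β : ℤ}

lemma one_le_Gg (hη : Antitone η) (hk1 : 1 ≤ k) (hkn : k < n) : 1 ≤ Gg n η k := by
  unfold Gg etaZ
  rw [dif_pos (by omega : k - 1 < n), dif_pos hkn]
  have := hη (a := ⟨k - 1, by omega⟩) (b := ⟨k, hkn⟩) (by simp only [Fin.mk_le_mk]; omega)
  omega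

lemma viol_iff_le_betaV (hk1 : 1 ≤ k) (hkn : k < n) (hp : p < m) :
    Viol m n η z k p ↔ z k p ≤ betaV n η z k p := by
  unfold Viol betaV
  rw [dstat_eq]
  constructor
  · rintro ⟨-, -, -, hd⟩; omega
  · intro hd; exact ⟨hk1, hkn, hp, by omega⟩

lemma betaV_le_Ub (hz : IsGT m n P Q z) (hk1 : 1 ≤ k) (hkn : k < n) (hp : p < m)
    (hG : 1 ≤ Gg n η k) (hprev : ¬ (1 ≤ p ∧ dstat z k (p - 1) ≤ -(Gg n η k))) :
    betaV n η z k p ≤ Ub z k p := by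
  unfold betaV
  by_cases hp0 : p = 0
  · subst hp0
    unfold Ub Dpre
    rw [if_pos rfl, Finset.range_zero, Finset.sum_empty]
    linarith
  · obtain ⟨p', rfl⟩ : ∃ p', p = p' + 1 := ⟨p - 1, by omega⟩
    have hd1 : -(Gg n η k) < dstat z k p' := by
      rcases lt_or_ge (-(Gg n η k)) (dstat z k p') with hc | hc
      · exact hc
      · exact absurd ⟨by omega, by rw [(show p' + 1 - 1 = p' by omega)]; exact hc⟩ hprev
    have hDstep : Dpre z k (p' + 1)
        = Dpre z k p' + (2 * z k p' - z (k - 1) p' - z (k + 1) p') := by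
      unfold Dpre
      rw [Finset.sum_range_succ]
    have hdstat' : dstat z k p' = Dpre z k p' + z k p' - z (k + 1) p' := rfl
    have hmono : z (k - 1) p' ≤ z k p' := by
      have := hz.2.2.1 (k - 1) (by omega) p' (by omega)
      rwa [(show k - 1 + 1 = k by omega)] at this
    have hcond4 : z (k + 1) (p' + 1) ≤ z k p' := hz.2.2.2.1 k (by omega) p' (by omega)
    unfold Ub
    rw [if_neg (by omega), (show p' + 1 - 1 = p' by omega)]
    apply le_min <;> linarith

lemma flipAt_bounds (hz : IsGT m n P Q z) (hk1 : 1 ≤ k) (hkn : k < n) (hp : p < m)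
    (hβ1 : z k p ≤ β) (hβ2 : β ≤ Ub z k p) :
    ∀ q, q < m → Lb m z k q ≤ (fun q =>
      if q < p then z k q
      else if q = p then Lb m z k p + β - z k p
      else Lb m z k q + Ub z k q - z k q) q
      ∧ (fun q =>
      if q < p then z k q
      else if q = p then Lb m z k p + β - z k p
      else Lb m z k q + Ub z k q - z k q) q ≤ Ub z k q := by
  intro q hq
  have h1 := Lb_le hz hk1 hkn hq
  have h2 := le_Ub hz hk1 hkn hq
  simp only
  split_ifs with hq1 hq2
  · exact ⟨h1, h2⟩
  · subst hq2
    have h1p := Lb_le hz hk1 hkn hp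
    constructor <;> linarith
  · constructor <;> linarith

lemma flipAt_isGT (hz : IsGT m n P Q z) (hk1 : 1 ≤ k) (hkn : k < n) (hp : p < m)
    (hβ1 : z k p ≤ β) (hβ2 : β ≤ Ub z k p) :
    IsGT m n P Q (flipAt m k p β z) :=
  updRow_isGT hz hk1 hkn (flipAt_bounds hz hk1 hkn hp hβ1 hβ2)

lemma flipAt_apply_ne {i q : ℕ} (hik : i ≠ k) : flipAt m k p β z i q = z i q :=
  updRow_apply_ne hik

lemma flipAt_apply_lt {q : ℕ} (hqp : q < p) : flipAt m k p β z k q = z k q := by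
  by_cases hq : q < m
  · unfold flipAt
    rw [updRow_apply_k hq, if_pos hqp]
  · unfold flipAt updRow
    rw [if_neg (by omega)]

lemma flipAt_apply_p (hp : p < m) : flipAt m k p β z k p = Lb m z k p + β - z k p := by
  unfold flipAt
  rw [updRow_apply_k hp, if_neg (by omega), if_pos rfl]

lemma flipAt_apply_gt {q : ℕ} (hqp : p < q) (hq : q < m) :
    flipAt m k p β z k q = Lb m z k q + Ub z k q - z k q := by
  unfold flipAt
  rw [updRow_apply_k hq, if_neg (by omega), if_neg (by omega)]

lemma sum_flipAt (hp : p < m) :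
    ∑ q ∈ Finset.range m, flipAt m k p β z k q
      = β + ∑ q ∈ Finset.Ico p m, z (k - 1) q + ∑ q ∈ Finset.Ico (p + 1) m, z (k + 1) q
        + ∑ q ∈ Finset.range p, z k q - ∑ q ∈ Finset.Ico p m, z k q := by
  rw [← Finset.sum_range_add_sum_Ico _ (le_of_lt hp)]
  have e1 : ∑ q ∈ Finset.range p, flipAt m k p β z k q = ∑ q ∈ Finset.range p, z k q :=
    Finset.sum_congr rfl fun q hq => flipAt_apply_lt (Finset.mem_range.mp hq)
  have e2 : ∑ q ∈ Finset.Ico p m, flipAt m k p β z k q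
      = (Lb m z k p + β - z k p) + ∑ q ∈ Finset.Ico (p + 1) m, (Lb m z k q + Ub z k q - z k q) := by
    rw [Finset.sum_eq_sum_Ico_succ_bot hp, flipAt_apply_p hp]
    congr 1
    refine Finset.sum_congr rfl fun q hq => ?_
    rw [Finset.mem_Ico] at hq
    exact flipAt_apply_gt (by omega) hq.2
  have e3 : ∑ q ∈ Finset.Ico (p + 1) m, (Lb m z k q + Ub z k q - z k q)
      = ∑ q ∈ Finset.Ico (p + 1) m, (Lb m z k q + Ub z k q)
        - ∑ q ∈ Finset.Ico (p + 1) m, z k q := by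
    rw [← Finset.sum_sub_distrib]
  have e4 : (Lb m z k p + Ub z k p) + ∑ q ∈ Finset.Ico (p + 1) m, (Lb m z k q + Ub z k q)
      = Ub z k p + ∑ q ∈ Finset.Ico p m, z (k - 1) q
        + ∑ q ∈ Finset.Ico (p + 1) m, z (k + 1) q := by
    rw [← Finset.sum_eq_sum_Ico_succ_bot hp (f := fun q => Lb m z k q + Ub z k q)]
    exact sum_LbUb p hp
  have e5 : ∑ q ∈ Finset.Ico p m, z k q = z k p + ∑ q ∈ Finset.Ico (p + 1) m, z k q :=
    Finset.sum_eq_sum_Ico_succ_bot hp _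
  rw [e1, e2, e3]
  linarith

lemma sum_theFlipAt (hp : p < m) :
    ∑ q ∈ Finset.range m, flipAt m k p (betaV n η z k p) z k q
      = ∑ q ∈ Finset.range m, z (k - 1) q + ∑ q ∈ Finset.range m, z (k + 1) q
        - ∑ q ∈ Finset.range m, z k q - Gg n η k := by
  rw [sum_flipAt hp]
  unfold betaV
  rw [Dpre_expand]
  have s1 : ∑ q ∈ Finset.range p, z (k - 1) q + ∑ q ∈ Finset.Ico p m, z (k - 1) q
      = ∑ q ∈ Finset.range m, z (k - 1) q := Finset.sum_range_add_sum_Ico _ (le_of_lt hp)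
  have s2 : ∑ q ∈ Finset.range p, z (k + 1) q + ∑ q ∈ Finset.Ico p m, z (k + 1) q
      = ∑ q ∈ Finset.range m, z (k + 1) q := Finset.sum_range_add_sum_Ico _ (le_of_lt hp)
  have s3 : ∑ q ∈ Finset.range p, z k q + ∑ q ∈ Finset.Ico p m, z k q
      = ∑ q ∈ Finset.range m, z k q := Finset.sum_range_add_sum_Ico _ (le_of_lt hp)
  have s4 : ∑ q ∈ Finset.Ico p m, z (k + 1) q = z (k + 1) p + ∑ q ∈ Finset.Ico (p + 1) m, z (k + 1) q :=
    Finset.sum_eq_sum_Ico_succ_bot hp _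
  linarith

lemma cnt_flipAt_k (hk1 : 1 ≤ k) (hp : p < m) :
    cnt m k (flipAt m k p (betaV n η z k p) z) = cnt m (k + 1) z - Gg n η k := by
  unfold flipAt
  rw [cnt_updRow_k hk1]
  have := sum_theFlipAt (η := η) (z := z) (k := k) hp
  unfold flipAt at this
  rw [sum_updRow_k] at this
  unfold cnt
  rw [(show k + 1 - 1 = k by omega)]
  linarith

lemma cnt_flipAt_k1 (hk1 : 1 ≤ k) (hp : p < m) :
    cnt m (k + 1) (flipAt m k p (betaV n η z k p) z) = cnt m k z + Gg n η k := by
  unfold flipAt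
  rw [cnt_updRow_k1]
  have := sum_theFlipAt (η := η) (z := z) (k := k) hp
  unfold flipAt at this
  rw [sum_updRow_k] at this
  unfold cnt
  linarith

end Cancel


section Cancel2

variable {m n : ℕ} {P Q : ℕ → ℤ} {η : Fin n → ℕ} {z : ℕ → ℕ → ℤ}

lemma viol_kst_pst (hna : ¬ AdmP m n η z) :
    Viol m n η z (kst m n η z) (pst m n η z) := by
  obtain ⟨p0, k0, hviol⟩ := not_admP_iff.mp hna
  have hne : {p | ∃ k, Viol m n η z k p}.Nonempty := ⟨p0, k0, hviol⟩
  obtain ⟨k1, hk1⟩ := Nat.sInf_mem hne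
  have hk1' : Viol m n η z k1 (pst m n η z) := hk1
  exact Nat.findGreatest_spec (P := fun k' => Viol m n η z k' (pst m n η z))
    hk1'.2.1.le hk1'

lemma pst_min {p' : ℕ} (hp' : p' < pst m n η z) (k' : ℕ) : ¬ Viol m n η z k' p' :=
  fun hv => Nat.notMem_of_lt_sInf hp' ⟨k', hv⟩

lemma kst_max {k' : ℕ} (hk' : kst m n η z < k') (hk'n : k' ≤ n) :
    ¬ Viol m n η z k' (pst m n η z) :=
  Nat.findGreatest_is_greatest (P := fun k'' => Viol m n η z k'' (pst m n η z)) hk' hk'n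

lemma dstat_congr {z z' : ℕ → ℕ → ℤ} {k' p' : ℕ}
    (h1 : ∀ q, q < p' → z' (k' - 1) q = z (k' - 1) q)
    (h2 : ∀ q, q ≤ p' → z' k' q = z k' q)
    (h3 : ∀ q, q ≤ p' → z' (k' + 1) q = z (k' + 1) q) :
    dstat z' k' p' = dstat z k' p' := by
  unfold dstat
  rw [h2 p' le_rfl, h3 p' le_rfl]
  congr 2
  apply Finset.sum_congr rfl
  intro q hq
  rw [Finset.mem_range] at hq
  rw [h1 q hq, h2 q (by omega), h3 q (by omega)]

lemma flipAt_agree {k p : ℕ} {β : ℤ} {i q : ℕ} (hor : i ≠ k ∨ q < p) :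
    flipAt m k p β z i q = z i q := by
  rcases hor with hik | hqp
  · exact flipAt_apply_ne hik
  · by_cases hik : i = k
    · subst hik; exact flipAt_apply_lt hqp
    · exact flipAt_apply_ne hik

/-- The master lemma about the flip at the first violation. -/
lemma theFlip_spec (h : ShapeHyps m n P Q) (hη : Antitone η) (hz : IsGT m n P Q z)
    (hna : ¬ AdmP m n η z) :
    IsGT m n P Q (theFlip m n η z) ∧ ¬ AdmP m n η (theFlip m n η z) ∧
    theFlip m n η (theFlip m n η z) = z ∧
    cnt m (kst m n η z) (theFlip m n η z)
      = cnt m (kst m n η z + 1) z - Gg n η (kst m n η z) ∧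
    cnt m (kst m n η z + 1) (theFlip m n η z)
      = cnt m (kst m n η z) z + Gg n η (kst m n η z) ∧
    (∀ i, i ≠ kst m n η z → i ≠ kst m n η z + 1 →
      cnt m i (theFlip m n η z) = cnt m i z) ∧
    1 ≤ kst m n η z ∧ kst m n η z < n := by
  obtain ⟨hk1, hkn, hp, hdv⟩ := viol_kst_pst (z := z) hna
  have hGmain : ∀ p' k', p' < pst m n η z → ¬ Viol m n η z k' p' := fun p' k' hh => pst_min hh k'
  have hKmain : ∀ k', kst m n η z < k' → k' ≤ n → ¬ Viol m n η z k' (pst m n η z) :=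
    fun k' h1 h2 => kst_max h1 h2
  set k := kst m n η z with hkdef
  set p := pst m n η z with hpdef
  set β := betaV n η z k p with hβdef
  set z' := theFlip m n η z with hz'def
  have hz'eq : z' = flipAt m k p β z := by
    rw [hz'def, hβdef, hkdef, hpdef]
    rfl
  clear_value k p β z'
  have hG : 1 ≤ Gg n η k := one_le_Gg hη hk1 hkn
  have hβ1 : z k p ≤ β := by
    rw [hβdef]
    exact (viol_iff_le_betaV hk1 hkn hp).mp ⟨hk1, hkn, hp, hdv⟩
  have hprev : ¬ (1 ≤ p ∧ dstat z k (p - 1) ≤ -(Gg n η k)) := by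
    rintro ⟨hp1, hd⟩
    exact hGmain (p - 1) k (by omega) ⟨hk1, hkn, by omega, hd⟩
  have hβ2 : β ≤ Ub z k p := by
    rw [hβdef]
    exact betaV_le_Ub hz hk1 hkn hp hG hprev
  have hz' : IsGT m n P Q z' := by
    rw [hz'eq]
    exact flipAt_isGT hz hk1 hkn hp hβ1 hβ2
  -- dstat invariance for p' < p
  have hA : ∀ k' p', p' < p → dstat z' k' p' = dstat z k' p' := by
    intro k' p' hp'
    rw [hz'eq]
    apply dstat_congr
    · intro q hq
      by_cases hc : k' - 1 = k
      · exact flipAt_agree (Or.inr (by omega))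
      · exact flipAt_agree (Or.inl hc)
    · intro q hq
      by_cases hc : k' = k
      · exact flipAt_agree (Or.inr (by omega))
      · exact flipAt_agree (Or.inl hc)
    · intro q hq
      by_cases hc : k' + 1 = k
      · exact flipAt_agree (Or.inr (by omega))
      · exact flipAt_agree (Or.inl hc)
  -- dstat invariance for rows above k at p
  have hB : ∀ k', k < k' → dstat z' k' p = dstat z k' p := by
    intro k' hk'
    rw [hz'eq]
    apply dstat_congr
    · intro q hq
      by_cases hc : k' - 1 = k
      · exact flipAt_agree (Or.inr (by omega))
      · exact flipAt_agree (Or.inl hc)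
    · intro q hq
      exact flipAt_agree (Or.inl (by omega))
    · intro q hq
      exact flipAt_agree (Or.inl (by omega))
  -- Dpre and betaV invariance
  have hDpre : Dpre z' k p = Dpre z k p := by
    rw [hz'eq]
    unfold Dpre
    apply Finset.sum_congr rfl
    intro q hq
    rw [Finset.mem_range] at hq
    rw [flipAt_agree (i := k) (q := q) (Or.inr hq),
      flipAt_agree (i := k - 1) (q := q) (Or.inl (by omega)),
      flipAt_agree (i := k + 1) (q := q) (Or.inl (by omega))]
  have hβ' : betaV n η z' k p = β := by
    rw [hβdef]
    unfold betaV
    rw [hDpre, hz'eq, flipAt_agree (i := k + 1) (q := p) (Or.inl (by omega))]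
  -- z' has a violation at (k, p)
  have hviol' : Viol m n η z' k p := by
    rw [viol_iff_le_betaV hk1 hkn hp, hβ', hz'eq, flipAt_apply_p hp]
    have := Lb_le hz hk1 hkn hp
    omega
  -- pst of z' equals p
  have hpst' : pst m n η z' = p := by
    apply le_antisymm
    · exact Nat.sInf_le ⟨k, hviol'⟩
    · by_contra hcon
      push_neg at hcon
      have hne' : {p'' | ∃ k'', Viol m n η z' k'' p''}.Nonempty := ⟨p, k, hviol'⟩
      have hmem : ∃ k'', Viol m n η z' k'' (pst m n η z') := Nat.sInf_mem hne'
      obtain ⟨k'', g1, g2, g3, g4⟩ := hmem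
      rw [hA k'' (pst m n η z') hcon] at g4
      exact hGmain (pst m n η z') k'' (by omega) ⟨g1, g2, g3, g4⟩
  -- kst of z' equals k
  have hkst' : kst m n η z' = k := by
    set K := Nat.findGreatest (fun k' => Viol m n η z' k' (pst m n η z')) n with hKdef
    have hkk : kst m n η z' = K := rfl
    have hk_le : k ≤ K := by
      rw [hKdef]
      apply Nat.le_findGreatest (by omega)
      rw [hpst']
      exact hviol'
    have hfg_le : K ≤ n := by rw [hKdef]; exact Nat.findGreatest_le n
    rcases Nat.eq_or_lt_of_le hk_le with heq | hlt
    · rw [hkk, ← heq]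
    · exfalso
      have hspec : Viol m n η z' K (pst m n η z') := by
        rw [hKdef]
        exact Nat.findGreatest_spec (P := fun k' => Viol m n η z' k' (pst m n η z')) (m := k)
          (by omega) (by rw [hpst']; exact hviol')
      clear_value K
      obtain ⟨g1, g2, g3, g4⟩ := hspec
      rw [hpst'] at g4
      rw [hB K hlt] at g4
      exact hKmain K (by omega) hfg_le ⟨g1, g2, hp, g4⟩
  -- involution
  have hLb' : Lb m z' k = Lb m z k := by
    funext q
    unfold Lb
    rw [hz'eq, flipAt_agree (i := k - 1) (q := q) (Or.inl (by omega)),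
      flipAt_agree (i := k + 1) (q := q + 1) (Or.inl (by omega))]
  have hUb' : Ub z' k = Ub z k := by
    funext q
    unfold Ub
    rw [hz'eq, flipAt_agree (i := k + 1) (q := 0) (Or.inl (by omega)),
      flipAt_agree (i := k - 1) (q := q - 1) (Or.inl (by omega)),
      flipAt_agree (i := k + 1) (q := q) (Or.inl (by omega))]
  have hinv : theFlip m n η z' = z := by
    have hfl : theFlip m n η z' = flipAt m k p β z' := by
      unfold theFlip
      rw [hpst', hkst', hβ']
    rw [hfl]
    funext i q
    by_cases hik : i = k
    · rw [hik]
      by_cases hqm : q < m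
      · rcases lt_trichotomy q p with hqp | rfl | hqp
        · rw [flipAt_apply_lt hqp, hz'eq, flipAt_apply_lt hqp]
        · rw [flipAt_apply_p hp, hLb', hz'eq, flipAt_apply_p hp]
          ring
        · rw [flipAt_apply_gt hqp hqm, hLb', hUb', hz'eq, flipAt_apply_gt hqp hqm]
          ring
      · have e1 : flipAt m k p β z' k q = z' k q := by
          unfold flipAt updRow
          rw [if_neg (by omega)]
        have e2 : z' k q = z k q := by
          rw [hz'eq]
          unfold flipAt updRow
          rw [if_neg (by omega)]
        rw [e1, e2]
    · rw [flipAt_apply_ne hik, hz'eq, flipAt_apply_ne hik]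
  refine ⟨hz', not_admP_iff.mpr ⟨p, k, hviol'⟩, hinv, ?_, ?_, ?_, hk1, hkn⟩
  · rw [hz'eq, hβdef]
    exact cnt_flipAt_k hk1 hp
  · rw [hz'eq, hβdef]
    exact cnt_flipAt_k1 hk1 hp
  · intro i hik hik1
    rw [hz'eq]
    unfold flipAt
    exact cnt_updRow_ne hk1 hik hik1

end Cancel2


section Final

variable {m n : ℕ} {P Q : ℕ → ℤ} {η : Fin n → ℕ}

lemma alt_neg {μ μ' : Fin n → ℕ} {j₁ j₂ : Fin n} (hne : j₁ ≠ j₂)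
    (h1 : μ' j₁ = μ j₂) (h2 : μ' j₂ = μ j₁) (h3 : ∀ j, j ≠ j₁ → j ≠ j₂ → μ' j = μ j) :
    alt n μ' = - alt n μ := by
  have hμ : ∀ j, μ' j = μ (Equiv.swap j₁ j₂ j) := by
    intro j
    by_cases hj1 : j = j₁
    · subst hj1; rw [Equiv.swap_apply_left]; exact h1
    · by_cases hj2 : j = j₂
      · subst hj2; rw [Equiv.swap_apply_right]; exact h2
      · rw [Equiv.swap_apply_of_ne_of_ne hj1 hj2]; exact h3 j hj1 hj2
  unfold alt
  have hM : (Matrix.of fun i j : Fin n => (MvPolynomial.X i : MvPolynomial (Fin n) ℤ) ^ μ' j)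
      = (Matrix.of fun i j : Fin n =>
          (MvPolynomial.X i : MvPolynomial (Fin n) ℤ) ^ μ j).submatrix id (Equiv.swap j₁ j₂) := by
    ext i j
    simp only [Matrix.of_apply, Matrix.submatrix_apply, id_eq]
    rw [hμ j]
  rw [hM, Matrix.det_permute', Equiv.Perm.sign_swap hne]
  simp

lemma alt_theFlip (h : ShapeHyps m n P Q) (hη : Antitone η) {z : ℕ → ℕ → ℤ}
    (hz : IsGT m n P Q z) (hna : ¬ AdmP m n η z) :
    alt n (fun j => η j + (cnt m ((j : ℕ) + 1) (theFlip m n η z)).toNat + (n - 1 - (j : ℕ)))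
      = - alt n (fun j => η j + (cnt m ((j : ℕ) + 1) z).toNat + (n - 1 - (j : ℕ))) := by
  obtain ⟨hz', hna', hinv, hck, hck1, hcne, hk1, hkn⟩ := theFlip_spec h hη hz hna
  set k := kst m n η z with hkdef
  set z' := theFlip m n η z with hz'def
  set j₁ : Fin n := ⟨k - 1, by omega⟩ with hj₁def
  set j₂ : Fin n := ⟨k, hkn⟩ with hj₂def
  have hj1v : (j₁ : ℕ) = k - 1 := rfl
  have hj2v : (j₂ : ℕ) = k := rfl
  have hGval : Gg n η k = (η j₁ : ℤ) - (η j₂ : ℤ) + 1 := by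
    unfold Gg etaZ
    rw [dif_pos (by omega : k - 1 < n), dif_pos (by omega : k < n)]
  have hkk : k - 1 + 1 = k := by omega
  apply alt_neg (j₁ := j₁) (j₂ := j₂)
  · intro hcon
    have := congrArg Fin.val hcon
    rw [hj1v, hj2v] at this
    omega
  · -- μ' j₁ = μ j₂
    rw [hj1v, hj2v, hkk]
    have h0a : 0 ≤ cnt m k z' := cnt_nonneg hz' hk1 (by omega)
    have h0b : 0 ≤ cnt m (k + 1) z := cnt_nonneg hz (by omega) (by omega)
    omega
  · -- μ' j₂ = μ j₁
    rw [hj1v, hj2v, hkk]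
    have h0a : 0 ≤ cnt m (k + 1) z' := cnt_nonneg hz' (by omega) (by omega)
    have h0b : 0 ≤ cnt m k z := cnt_nonneg hz hk1 (by omega)
    omega
  · intro j hja hjb
    have hva : (j : ℕ) ≠ k - 1 := fun hc => hja (Fin.ext (by rw [hj1v, hc]))
    have hvb : (j : ℕ) ≠ k := fun hc => hjb (Fin.ext (by rw [hj2v, hc]))
    rw [hcne ((j : ℕ) + 1) (by omega) (by omega)]

lemma cancel_sum (h : ShapeHyps m n P Q) {Z : Finset (ℕ → ℕ → ℤ)}
    (hZ : ∀ z, z ∈ Z ↔ IsGT m n P Q z) (hη : Antitone η) :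
    ∑ z ∈ Z.filter (fun z => ¬ AdmP m n η z),
      alt n (fun j => η j + (cnt m ((j : ℕ) + 1) z).toNat + (n - 1 - (j : ℕ))) = 0 := by
  apply Finset.sum_involution (g := fun z _ => theFlip m n η z)
  · intro z hzmem
    rw [Finset.mem_filter, hZ] at hzmem
    rw [alt_theFlip h hη hzmem.1 hzmem.2]
    ring
  · intro z hzmem hfz hcon
    rw [Finset.mem_filter, hZ] at hzmem
    apply hfz
    have := alt_theFlip h hη hzmem.1 hzmem.2
    rw [hcon] at this
    have h2 : (2 : MvPolynomial (Fin n) ℤ)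
        * alt n (fun j => η j + (cnt m ((j : ℕ) + 1) z).toNat + (n - 1 - (j : ℕ))) = 0 := by
      linear_combination this
    rcases mul_eq_zero.mp h2 with hc | hc
    · exact absurd hc two_ne_zero
    · exact hc
  · intro z hzmem
    rw [Finset.mem_filter, hZ] at hzmem
    obtain ⟨hz', hna', _, _, _, _, _, _⟩ := theFlip_spec h hη hzmem.1 hzmem.2
    rw [Finset.mem_filter, hZ]
    exact ⟨hz', hna'⟩
  · intro z hzmem
    rw [Finset.mem_filter, hZ] at hzmem
    obtain ⟨_, _, hinv, _, _, _, _, _⟩ := theFlip_spec h hη hzmem.1 hzmem.2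
    exact hinv

end Final

/-- The Zelevinsky–Stembridge rule.  For a weakly decreasing
`η : Fin n → ℕ` (with `η j` playing the role of `η_{j+1}`) and
`δ = (n-1,…,1,0)`, the product `a_{η+δ} · s_{P/Q}` equals the sum of the
alternants `a_{η+c(z)+δ}` over all `η`-ballot-admissible GT `n`-parallelograms
`z` framed by `P/Q`, where `c(z) = (#_1(z),…,#_n(z))`. -/
theorem zelevinsky_stembridge_rule
    (m n : ℕ) (P Q : ℕ → ℤ) (h : ShapeHyps m n P Q)
    (η : Fin n → ℕ) (hη : Antitone η) :
    alt n (fun j => η j + (n - 1 - (j : ℕ))) * skewSchur m n P Q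
      = ∑ᶠ z ∈ {z : ℕ → ℕ → ℤ | IsGT m n P Q z ∧
          ∀ k, ∀ _ : 1 ≤ k, ∀ hk : k < n, ∀ p < m,
            -((η ⟨k - 1, by omega⟩ : ℤ) - (η ⟨k, hk⟩ : ℤ)) ≤ dstat z k p},
          alt n (fun j => η j + (cnt m ((j : ℕ) + 1) z).toNat + (n - 1 - (j : ℕ))) := by
  have hfin := finite_GT h
  have hZ : ∀ z, z ∈ hfin.toFinset ↔ IsGT m n P Q z := fun z => Set.Finite.mem_toFinset hfin
  have E1 : alt n (fun j => η j + (n - 1 - (j : ℕ))) * skewSchur m n P Q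
      = ∑ z ∈ hfin.toFinset,
          alt n (fun j => η j + (cnt m ((j : ℕ) + 1) z).toNat + (n - 1 - (j : ℕ))) := by
    rw [skewSchur_eq h hZ, ← sum_alt_eq h hZ (fun j => η j + (n - 1 - (j : ℕ)))]
    apply Finset.sum_congr rfl
    intro z _
    congr 1
    funext j
    omega
  have E2 : ∑ z ∈ hfin.toFinset,
        alt n (fun j => η j + (cnt m ((j : ℕ) + 1) z).toNat + (n - 1 - (j : ℕ)))
      = ∑ z ∈ hfin.toFinset.filter (fun z => AdmP m n η z),
          alt n (fun j => η j + (cnt m ((j : ℕ) + 1) z).toNat + (n - 1 - (j : ℕ))) := by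
    rw [← Finset.sum_filter_add_sum_filter_not hfin.toFinset (fun z => AdmP m n η z)
      (fun z => alt n (fun j => η j + (cnt m ((j : ℕ) + 1) z).toNat + (n - 1 - (j : ℕ)))),
      cancel_sum h hZ hη, add_zero]
  have hseteq : {z : ℕ → ℕ → ℤ | IsGT m n P Q z ∧
        ∀ k, ∀ _ : 1 ≤ k, ∀ hk : k < n, ∀ p < m,
          -((η ⟨k - 1, by omega⟩ : ℤ) - (η ⟨k, hk⟩ : ℤ)) ≤ dstat z k p}
      = ↑(hfin.toFinset.filter (fun z => AdmP m n η z)) := by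
    ext z
    rw [Finset.mem_coe, Finset.mem_filter, hZ]
    simp only [Set.mem_setOf_eq]
    constructor
    · rintro ⟨h1, h2⟩
      refine ⟨h1, ?_⟩
      intro k p hk1 hkn hpm
      have hd := h2 k hk1 hkn p hpm
      unfold etaZ
      rw [dif_pos (by omega : k - 1 < n), dif_pos hkn]
      exact hd
    · rintro ⟨h1, h2⟩
      refine ⟨h1, ?_⟩
      intro k hk1 hkn p hpm
      have hd := h2 k p hk1 hkn hpm
      unfold etaZ at hd
      rw [dif_pos (by omega : k - 1 < n), dif_pos hkn] at hd
      exact hd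
  rw [E1, E2, hseteq, finsum_mem_coe_finset]
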